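/- arXiv:2209.12336 — 2 statements merged into one kernel-verified Lean document; each statement's English description precedes it below -/
import Mathlib

section
/- Let X be a set of states, let V̂ : X → ℝ be a learned value function and J : X → ℝ a cost function satisfying J(x) ≤ V(x) for all x, where V is the true value function. Define δ = sup{V̂(x) : x ∈ X, J(x) ≤ 0} and the recovered safe set S̃ = {x ∈ X : V̂(x) > δ}. Then every x ∈ S̃ satisfies V(x) > 0, i.e., S̃ is contained in the complement of the backward reachable tube BRT = {x ∈ X : V(x) ≤ 0}. -/
/-- If `J ≤ V` pointwise and `δ = sSup (V̂ '' {x | J x ≤ 0})`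
(nonempty, bounded above), then every state in the recovered safe set
`{x | V̂ x > δ}` satisfies `V x > 0`, i.e. lies outside the BRT. -/
theorem recovered_safe_set_subset_BRT_compl
    {X : Type*} [Nonempty X]
    (Vhat J V : X → ℝ)
    (hJV : ∀ x, J x ≤ V x)
    (hne : ∃ x, J x ≤ 0)
    (hbdd : BddAbove (Vhat '' {x | J x ≤ 0})) :
    {x | Vhat x > sSup (Vhat '' {x | J x ≤ 0})} ⊆ {x | V x > 0} := by
  intro x hx
  by_contra h
  simp only [Set.mem_setOf_eq, not_lt] at h
  have hJ : J x ≤ 0 := le_trans (hJV x) h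
  have : Vhat x ≤ sSup (Vhat '' {x | J x ≤ 0}) :=
    le_csSup hbdd ⟨x, hJ, rfl⟩
  exact absurd hx (not_lt.mpr this)
end

section
/- Let ε, β ∈ (0,1) and let N be a natural number with N ≥ (2/ε)(ln(1/β) + 1). Then (choosing d = 1 in the standard scenario-optimization bound) the binomial tail bound holds: C(N, 0)·(1−ε)^N + C(N, 1)·ε·(1−ε)^(N−1) ≤ β is implied; in particular N·ε·(1−ε)^(N−1) + (1−ε)^N ≤ β. -/
/-- sample-complexity bound for scenario optimization with one
decision variable: if `N ≥ (2/ε)(ln(1/β) + 1)` with `ε, β ∈ (0,1)`, then the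
binomial tail bound `C(N,0)(1-ε)^N + C(N,1) ε (1-ε)^(N-1) ≤ β` holds; in
particular `N ε (1-ε)^(N-1) + (1-ε)^N ≤ β`. -/
theorem scenario_sample_complexity
    (ε β : ℝ) (hε : 0 < ε) (hε1 : ε < 1) (hβ : 0 < β) (hβ1 : β < 1)
    (N : ℕ) (hN : (2 / ε) * (Real.log (1 / β) + 1) ≤ (N : ℝ)) :
    (N.choose 0 : ℝ) * (1 - ε) ^ N
      + (N.choose 1 : ℝ) * ε * (1 - ε) ^ (N - 1) ≤ β ∧
    (N : ℝ) * ε * (1 - ε) ^ (N - 1) + (1 - ε) ^ N ≤ β := by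
  have hβinv : 1 < 1 / β := by rw [lt_div_iff₀ hβ]; linarith
  set L := Real.log (1 / β) with hLdef
  have hL : 0 < L := Real.log_pos hβinv
  have hNε : 2 * (L + 1) ≤ (N : ℝ) * ε := by
    calc 2 * (L + 1) = (2 / ε) * (L + 1) * ε := by field_simp
      _ ≤ (N : ℝ) * ε := by nlinarith
  have hN1 : 1 ≤ N := by
    rcases Nat.eq_zero_or_pos N with h0 | h
    · exfalso; rw [h0] at hNε; push_cast at hNε; nlinarith
    · exact h
  set M := N - 1 with hM
  have hMc : (M : ℝ) = (N : ℝ) - 1 := by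
    rw [hM]; push_cast [Nat.cast_sub hN1]; ring
  set t := (M : ℝ) * ε with htdef
  have ht : 2 * L + 1 ≤ t := by rw [htdef, hMc]; nlinarith
  have ht0 : 0 ≤ t := by positivity
  have hpow : (1 - ε) ^ M ≤ Real.exp (-t) := by
    have h1 : (1 - ε) ≤ Real.exp (-ε) := by nlinarith [Real.add_one_le_exp (-ε)]
    calc (1 - ε) ^ M ≤ (Real.exp (-ε)) ^ M := pow_le_pow_left₀ (by linarith) h1 M
      _ = Real.exp (-t) := by
          rw [← Real.exp_nat_mul]; congr 1; rw [htdef]; ring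
  have hexpu : 1 + t ≤ Real.exp ((t + 1) / 2) := by
    have h1 := Real.add_one_le_exp ((t + 1) / 4)
    have h2 : Real.exp ((t + 1) / 4) * Real.exp ((t + 1) / 4)
        = Real.exp ((t + 1) / 2) := by
      rw [← Real.exp_add]; ring_nf
    nlinarith [Real.exp_pos ((t + 1) / 4), sq_nonneg (1 - (t + 1) / 4)]
  have hmain : (1 + t) * Real.exp (-t) ≤ β := by
    have h3 : (1 + t) * Real.exp (-t) ≤ Real.exp ((t + 1) / 2) * Real.exp (-t) :=
      mul_le_mul_of_nonneg_right hexpu (Real.exp_pos _).le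
    have h4 : Real.exp ((t + 1) / 2) * Real.exp (-t) = Real.exp ((1 - t) / 2) := by
      rw [← Real.exp_add]; ring_nf
    have h5 : Real.exp ((1 - t) / 2) ≤ Real.exp (-L) :=
      Real.exp_le_exp.mpr (by linarith)
    have h6 : Real.exp (-L) = β := by
      rw [hLdef, one_div, Real.log_inv, neg_neg, Real.exp_log hβ]
    linarith
  have key : (1 - ε) ^ N + (N : ℝ) * ε * (1 - ε) ^ M ≤ β := by
    have hNe : (1 - ε) ^ N = (1 - ε) * (1 - ε) ^ M := by
      conv_lhs => rw [show N = M + 1 from (Nat.succ_pred_eq_of_pos hN1).symm]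
      ring
    have hnn : (0 : ℝ) ≤ (1 - ε) ^ M := pow_nonneg (by linarith) M
    have heq : (1 - ε) ^ N + (N : ℝ) * ε * (1 - ε) ^ M
        = (1 + t) * (1 - ε) ^ M := by rw [hNe, htdef, hMc]; ring
    rw [heq]
    calc (1 + t) * (1 - ε) ^ M ≤ (1 + t) * Real.exp (-t) :=
          mul_le_mul_of_nonneg_left hpow (by linarith)
      _ ≤ β := hmain
  constructor
  · simpa [Nat.choose_one_right] using key
  · linarith
end
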